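/- Let m ≤ n, p ∈ [1,∞), μ a Borel probability measure on ℝᵐ with finite p-th moment and ν a Borel probability measure on ℝⁿ with finite p-th moment. Then the projection p-Wasserstein distance inf_{β ∈ Φ⁻(ν,m)} W_p(μ, β) equals the embedding p-Wasserstein distance inf_{α ∈ Φ⁺_p(μ,n)} W_p(α, ν). -/

import Mathlib

open MeasureTheory ENNReal

noncomputable section

/-- The affine map `x ↦ Vx + b` from `ℝⁿ` to `ℝᵐ` (Euclidean spaces). -/
def phiAff {m n : ℕ} (V : Matrix (Fin m) (Fin n) ℝ)
    (b : EuclideanSpace ℝ (Fin m)) (x : EuclideanSpace ℝ (Fin n)) :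
    EuclideanSpace ℝ (Fin m) :=
  (EuclideanSpace.equiv (Fin m) ℝ).symm
    (V.mulVec (EuclideanSpace.equiv (Fin n) ℝ x) + (EuclideanSpace.equiv (Fin m) ℝ) b)

/-- The `p`-Wasserstein distance: infimum over couplings of
`(∫ ‖x − y‖^p dγ)^{1/p}` (Euclidean norm). -/
def wassersteinDist (p : ℝ) {k : ℕ}
    (μ ν : Measure (EuclideanSpace ℝ (Fin k))) : ℝ :=
  sInf {r : ℝ | ∃ γ : Measure (EuclideanSpace ℝ (Fin k) × EuclideanSpace ℝ (Fin k)),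
    γ.map Prod.fst = μ ∧ γ.map Prod.snd = ν ∧
    r = (∫ z, ‖z.1 - z.2‖ ^ p ∂γ) ^ (1 / p)}

/-- The `f`-divergence `D_f(μ‖ν) = ∫ f(dμ/dν) dν`. -/
def fDivergence (f : ℝ → ℝ) {k : ℕ}
    (μ ν : Measure (EuclideanSpace ℝ (Fin k))) : ℝ :=
  ∫ x, f ((μ.rnDeriv ν x).toReal) ∂ν

/-- The Kullback–Leibler divergence `∫ log(dμ/dν) dμ`. -/
def klDivergence {k : ℕ} (μ ν : Measure (EuclideanSpace ℝ (Fin k))) : ℝ :=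
  ∫ x, Real.log ((μ.rnDeriv ν x).toReal) ∂μ

/-- The mixture `(1−θ)μ + θν`. -/
def mixture (θ : ℝ) {k : ℕ} (μ ν : Measure (EuclideanSpace ℝ (Fin k))) :
    Measure (EuclideanSpace ℝ (Fin k)) :=
  ENNReal.ofReal (1 - θ) • μ + ENNReal.ofReal θ • ν

/-- The θ-weighted Jensen–Shannon divergence. -/
def jsDivergence (θ : ℝ) {k : ℕ} (μ ν : Measure (EuclideanSpace ℝ (Fin k))) : ℝ :=
  (1 / 2) * klDivergence μ (mixture θ μ ν) + (1 / 2) * klDivergence ν (mixture θ ν μ)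

/-- The total variation metric `sup_A |μ(A) − ν(A)|`. -/
def tvDist {k : ℕ} (μ ν : Measure (EuclideanSpace ℝ (Fin k))) : ℝ :=
  sSup {r : ℝ | ∃ A : Set (EuclideanSpace ℝ (Fin k)), MeasurableSet A ∧
    r = |(μ A).toReal - (ν A).toReal|}

/-- The Hellinger squared divergence `∫ (√(dμ/dν) − 1)² dν`. -/
def hellingerSq {k : ℕ} (μ ν : Measure (EuclideanSpace ℝ (Fin k))) : ℝ :=
  ∫ x, (Real.sqrt ((μ.rnDeriv ν x).toReal) - 1) ^ 2 ∂ν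

/-- `ν` has a strictly positive density w.r.t. Lebesgue measure. -/
def HasPosDensity {k : ℕ} (ν : Measure (EuclideanSpace ℝ (Fin k))) : Prop :=
  ∃ t : EuclideanSpace ℝ (Fin k) → ℝ, Measurable t ∧ (∀ x, 0 < t x) ∧
    ν = volume.withDensity fun x => ENNReal.ofReal (t x)

end

noncomputable section AuxProof
variable {m n : ℕ}

-- === linear algebra (from t1) ===
variable {m n : ℕ}

lemma tELmul (A : Matrix (Fin m) (Fin n) ℝ) (B : Matrix (Fin n) (Fin m) ℝ)
    (w : EuclideanSpace ℝ (Fin m)) :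
    Matrix.toEuclideanLin (A * B) w = Matrix.toEuclideanLin A (Matrix.toEuclideanLin B w) := by
  simp [Matrix.toEuclideanLin_apply, ← Matrix.mulVec_mulVec]

lemma VVt_id (V : Matrix (Fin m) (Fin n) ℝ) (hV : V * V.transpose = 1)
    (w : EuclideanSpace ℝ (Fin m)) :
    Matrix.toEuclideanLin V (Matrix.toEuclideanLin V.transpose w) = w := by
  rw [← tELmul, hV]
  simp [Matrix.toEuclideanLin_apply]

lemma Vt_adj (V : Matrix (Fin m) (Fin n) ℝ) :
    Matrix.toEuclideanLin V.transpose = LinearMap.adjoint (Matrix.toEuclideanLin V) := by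
  rw [← Matrix.toEuclideanLin_conjTranspose_eq_adjoint]
  congr 1

lemma Vt_isom (V : Matrix (Fin m) (Fin n) ℝ) (hV : V * V.transpose = 1)
    (w : EuclideanSpace ℝ (Fin m)) :
    ‖Matrix.toEuclideanLin V.transpose w‖ = ‖w‖ := by
  have h1 : ‖Matrix.toEuclideanLin V.transpose w‖ ^ 2 = ‖w‖ ^ 2 := by
    rw [← real_inner_self_eq_norm_sq, ← real_inner_self_eq_norm_sq]
    nth_rewrite 1 [Vt_adj]
    rw [LinearMap.adjoint_inner_left, VVt_id V hV]
  rw [← Real.sqrt_sq (norm_nonneg (Matrix.toEuclideanLin V.transpose w)),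
    ← Real.sqrt_sq (norm_nonneg w), h1]

lemma V_contr (V : Matrix (Fin m) (Fin n) ℝ) (hV : V * V.transpose = 1)
    (v : EuclideanSpace ℝ (Fin n)) :
    ‖Matrix.toEuclideanLin V v‖ ≤ ‖v‖ := by
  have key : ‖Matrix.toEuclideanLin V v‖ ^ 2 ≤ ‖v‖ * ‖Matrix.toEuclideanLin V v‖ := by
    rw [← real_inner_self_eq_norm_sq]
    calc inner ℝ (Matrix.toEuclideanLin V v) (Matrix.toEuclideanLin V v)
        = inner ℝ v (Matrix.toEuclideanLin V.transpose (Matrix.toEuclideanLin V v)) := by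
          rw [Vt_adj, LinearMap.adjoint_inner_right]
      _ ≤ ‖v‖ * ‖Matrix.toEuclideanLin V.transpose (Matrix.toEuclideanLin V v)‖ :=
          real_inner_le_norm _ _
      _ = ‖v‖ * ‖Matrix.toEuclideanLin V v‖ := by rw [Vt_isom V hV]
  rcases eq_or_lt_of_le (norm_nonneg (Matrix.toEuclideanLin V v)) with h | h
  · rw [← h]; exact norm_nonneg v
  · nlinarith [norm_nonneg v]

-- === phiAff (from t2) ===
lemma phiAff_eq (V : Matrix (Fin m) (Fin n) ℝ) (b : EuclideanSpace ℝ (Fin m))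
    (x : EuclideanSpace ℝ (Fin n)) :
    phiAff V b x = Matrix.toEuclideanLin V x + b := by
  ext i
  simp [phiAff, Matrix.toEuclideanLin_apply]
  rfl

lemma phiAff_continuous (V : Matrix (Fin m) (Fin n) ℝ) (b : EuclideanSpace ℝ (Fin m)) :
    Continuous (phiAff V b) := by
  simp only [funext (phiAff_eq V b)]
  exact ((Matrix.toEuclideanLin V).continuous_of_finiteDimensional).add continuous_const

lemma phiAff_measurable (V : Matrix (Fin m) (Fin n) ℝ) (b : EuclideanSpace ℝ (Fin m)) :
    Measurable (phiAff V b) := (phiAff_continuous V b).measurable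

-- === integrability (from t3) ===
variable {p : ℝ}

lemma normRpowCont (hp : 1 ≤ p) {E : Type*} [NormedAddCommGroup E] :
    Continuous (fun x : E => ‖x‖ ^ p) :=
  continuous_norm.rpow_const (fun x => Or.inr (by linarith))

lemma rpow_add_le (hp : 1 ≤ p) {a b : ℝ} (ha : 0 ≤ a) (hb : 0 ≤ b) :
    (a + b) ^ p ≤ 2 ^ p * (a ^ p + b ^ p) := by
  have hp0 : 0 ≤ p := by linarith
  calc (a + b) ^ p ≤ (2 * max a b) ^ p := by
        apply Real.rpow_le_rpow (by linarith)
        · rcases le_total a b with h | h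
          · simp [max_eq_right h]; linarith
          · simp [max_eq_left h]; linarith
        · exact hp0
    _ = 2 ^ p * (max a b) ^ p := Real.mul_rpow (by norm_num) (le_trans ha (le_max_left a b))
    _ ≤ 2 ^ p * (a ^ p + b ^ p) := by
        apply mul_le_mul_of_nonneg_left _ (Real.rpow_nonneg (by norm_num) p)
        rcases le_total a b with h | h
        · rw [max_eq_right h]
          nlinarith [Real.rpow_nonneg ha p]
        · rw [max_eq_left h]
          nlinarith [Real.rpow_nonneg hb p]

section Integ
variable {Z E : Type*} [MeasurableSpace Z] [NormedAddCommGroup E] [MeasurableSpace E]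
  [BorelSpace E] {ρ : Measure Z}

lemma integrable_norm_rpow_comp_map (hp : 1 ≤ p) {f : Z → E} (hf : Measurable f)
    {μ : Measure E} (hmap : ρ.map f = μ) (hμ : Integrable (fun x => ‖x‖ ^ p) μ) :
    Integrable (fun z => ‖f z‖ ^ p) ρ := by
  rw [← hmap] at hμ
  exact (integrable_map_measure (normRpowCont hp).aestronglyMeasurable
    hf.aemeasurable).mp hμ

omit [MeasurableSpace E] [BorelSpace E] in
lemma integrable_norm_rpow_add (hp : 1 ≤ p) {f g : Z → E}
    (hf : AEStronglyMeasurable f ρ) (hg : AEStronglyMeasurable g ρ)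
    (hif : Integrable (fun z => ‖f z‖ ^ p) ρ) (hig : Integrable (fun z => ‖g z‖ ^ p) ρ) :
    Integrable (fun z => ‖f z + g z‖ ^ p) ρ := by
  have hp0 : 0 ≤ p := by linarith
  refine Integrable.mono (((hif.add hig).const_mul (2 ^ p))) ?_ ?_
  · exact (normRpowCont hp).comp_aestronglyMeasurable (hf.add hg)
  · filter_upwards with z
    rw [Real.norm_eq_abs, Real.norm_eq_abs, abs_of_nonneg (Real.rpow_nonneg (norm_nonneg _) p),
      abs_of_nonneg]
    · calc ‖f z + g z‖ ^ p ≤ (‖f z‖ + ‖g z‖) ^ p :=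
            Real.rpow_le_rpow (norm_nonneg _) (norm_add_le _ _) hp0
        _ ≤ 2 ^ p * (‖f z‖ ^ p + ‖g z‖ ^ p) := rpow_add_le hp (norm_nonneg _) (norm_nonneg _)
    · exact mul_nonneg (Real.rpow_nonneg (by norm_num) p)
        (add_nonneg (Real.rpow_nonneg (norm_nonneg _) p) (Real.rpow_nonneg (norm_nonneg _) p))
end Integ

-- === Wasserstein infrastructure ===
def cset (p : ℝ) {k : ℕ} (μ ν : Measure (EuclideanSpace ℝ (Fin k))) : Set ℝ :=
  {r : ℝ | ∃ γ : Measure (EuclideanSpace ℝ (Fin k) × EuclideanSpace ℝ (Fin k)),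
    γ.map Prod.fst = μ ∧ γ.map Prod.snd = ν ∧
    r = (∫ z, ‖z.1 - z.2‖ ^ p ∂γ) ^ (1 / p)}

lemma wassersteinDist_eq {k : ℕ} (μ ν : Measure (EuclideanSpace ℝ (Fin k))) :
    wassersteinDist p μ ν = sInf (cset p μ ν) := rfl

lemma cset_nonneg {k : ℕ} {μ ν : Measure (EuclideanSpace ℝ (Fin k))} {r : ℝ}
    (hr : r ∈ cset p μ ν) : 0 ≤ r := by
  obtain ⟨γ, -, -, rfl⟩ := hr
  exact Real.rpow_nonneg (integral_nonneg fun z => Real.rpow_nonneg (norm_nonneg _) p) _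

lemma cset_bddBelow {k : ℕ} (μ ν : Measure (EuclideanSpace ℝ (Fin k))) :
    BddBelow (cset p μ ν) := ⟨0, fun r hr => cset_nonneg hr⟩

lemma cset_nonempty {k : ℕ} (μ ν : Measure (EuclideanSpace ℝ (Fin k)))
    [IsProbabilityMeasure μ] [IsProbabilityMeasure ν] : (cset p μ ν).Nonempty := by
  refine ⟨_, μ.prod ν, ?_, ?_, rfl⟩
  · exact Measure.fst_prod
  · exact Measure.snd_prod

lemma wassersteinDist_nonneg {k : ℕ} (μ ν : Measure (EuclideanSpace ℝ (Fin k))) :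
    0 ≤ wassersteinDist p μ ν :=
  Real.sInf_nonneg fun _ hr => cset_nonneg hr

lemma isProbabilityMeasure_of_map_fst {A B : Type*} [MeasurableSpace A] [MeasurableSpace B]
    {γ : Measure (A × B)} {μ : Measure A} [IsProbabilityMeasure μ]
    (h : γ.map Prod.fst = μ) : IsProbabilityMeasure γ := by
  constructor
  have := measure_univ (μ := μ)
  rw [← h, Measure.map_apply measurable_fst MeasurableSet.univ] at this
  simpa using this

lemma integrable_cost (hp : 1 ≤ p) {k : ℕ} {α ν : Measure (EuclideanSpace ℝ (Fin k))}
    {Θ : Measure (EuclideanSpace ℝ (Fin k) × EuclideanSpace ℝ (Fin k))}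
    (h1 : Θ.map Prod.fst = α) (h2 : Θ.map Prod.snd = ν)
    (hα : Integrable (fun x => ‖x‖ ^ p) α) (hν : Integrable (fun x => ‖x‖ ^ p) ν) :
    Integrable (fun z => ‖z.1 - z.2‖ ^ p) Θ := by
  have hf := integrable_norm_rpow_comp_map hp measurable_fst h1 hα
  have hg := integrable_norm_rpow_comp_map hp measurable_snd h2 hν
  have hg' : Integrable (fun z : EuclideanSpace ℝ (Fin k) × EuclideanSpace ℝ (Fin k) =>
      ‖-z.2‖ ^ p) Θ := by simpa using hg
  have := integrable_norm_rpow_add hp measurable_fst.aestronglyMeasurable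
    (measurable_snd.neg.aestronglyMeasurable) hf hg'
  simpa [sub_eq_add_neg] using this

-- === easy direction ===
lemma easy_dir (hp : 1 ≤ p) (V : Matrix (Fin m) (Fin n) ℝ) (b : EuclideanSpace ℝ (Fin m))
    (hV : V * V.transpose = 1) (μ : Measure (EuclideanSpace ℝ (Fin m)))
    (ν : Measure (EuclideanSpace ℝ (Fin n)))
    [IsProbabilityMeasure μ] [IsProbabilityMeasure ν]
    (hν : Integrable (fun x => ‖x‖ ^ p) ν)
    (α : Measure (EuclideanSpace ℝ (Fin n))) [IsProbabilityMeasure α]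
    (hαm : Integrable (fun x => ‖x‖ ^ p) α)
    (hpush : α.map (phiAff V b) = μ) :
    wassersteinDist p μ (ν.map (phiAff V b)) ≤ wassersteinDist p α ν := by
  haveI : IsProbabilityMeasure (ν.map (phiAff V b)) :=
    Measure.isProbabilityMeasure_map (phiAff_measurable V b).aemeasurable
  rw [wassersteinDist_eq, wassersteinDist_eq]
  apply le_csInf (cset_nonempty α ν)
  rintro r ⟨Θ, h1, h2, rfl⟩
  haveI : IsProbabilityMeasure Θ := isProbabilityMeasure_of_map_fst h1
  set φ := phiAff V b with hφ
  have hφm : Measurable φ := phiAff_measurable V b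
  have hmm : Measurable (Prod.map φ φ) := hφm.prodMap hφm
  refine le_trans (csInf_le (cset_bddBelow _ _) ⟨Θ.map (Prod.map φ φ), ?_, ?_, rfl⟩) ?_
  · rw [Measure.map_map measurable_fst hmm]
    have : (Prod.fst ∘ Prod.map φ φ) = φ ∘ Prod.fst := rfl
    rw [this, ← Measure.map_map hφm measurable_fst, h1, hpush]
  · rw [Measure.map_map measurable_snd hmm]
    have : (Prod.snd ∘ Prod.map φ φ) = φ ∘ Prod.snd := rfl
    rw [this, ← Measure.map_map hφm measurable_snd, h2]
  · apply Real.rpow_le_rpow (integral_nonneg fun z => Real.rpow_nonneg (norm_nonneg _) p)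
      ?_ (by positivity)
    have hc : AEStronglyMeasurable
        (fun a : EuclideanSpace ℝ (Fin m) × EuclideanSpace ℝ (Fin m) => ‖a.1 - a.2‖ ^ p)
        (Θ.map (Prod.map φ φ)) :=
      ((normRpowCont hp).comp (continuous_fst.sub continuous_snd)).aestronglyMeasurable
    rw [integral_map hmm.aemeasurable hc]
    simp only [Prod.map_fst, Prod.map_snd, Prod.map_apply]
    have hcost : Integrable (fun z : EuclideanSpace ℝ (Fin n) × EuclideanSpace ℝ (Fin n) =>
        ‖z.1 - z.2‖ ^ p) Θ := integrable_cost hp h1 h2 hαm hν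
    apply integral_mono ?_ hcost
    · intro z
      apply Real.rpow_le_rpow (norm_nonneg _) ?_ (by linarith)
      show ‖φ z.1 - φ z.2‖ ≤ ‖z.1 - z.2‖
      rw [hφ, phiAff_eq, phiAff_eq]
      have : Matrix.toEuclideanLin V z.1 + b - (Matrix.toEuclideanLin V z.2 + b)
          = Matrix.toEuclideanLin V (z.1 - z.2) := by
        rw [map_sub]; abel
      rw [this]
      exact V_contr V hV _
    · apply Integrable.mono hcost
      · exact ((normRpowCont hp).comp ((phiAff_continuous V b).comp continuous_fst |>.sub
          ((phiAff_continuous V b).comp continuous_snd))).aestronglyMeasurable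
      · filter_upwards with z
        rw [Real.norm_eq_abs, Real.norm_eq_abs, abs_of_nonneg (Real.rpow_nonneg (norm_nonneg _) _),
          abs_of_nonneg (Real.rpow_nonneg (norm_nonneg _) _)]
        apply Real.rpow_le_rpow (norm_nonneg _) ?_ (by linarith)
        show ‖φ z.1 - φ z.2‖ ≤ ‖z.1 - z.2‖
        rw [hφ, phiAff_eq, phiAff_eq]
        have : Matrix.toEuclideanLin V z.1 + b - (Matrix.toEuclideanLin V z.2 + b)
            = Matrix.toEuclideanLin V (z.1 - z.2) := by
          rw [map_sub]; abel
        rw [this]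
        exact V_contr V hV _

-- === hard direction ===
open ProbabilityTheory in
lemma hard_dir (hp : 1 ≤ p) (V : Matrix (Fin m) (Fin n) ℝ) (b : EuclideanSpace ℝ (Fin m))
    (hV : V * V.transpose = 1) (μ : Measure (EuclideanSpace ℝ (Fin m)))
    (ν : Measure (EuclideanSpace ℝ (Fin n)))
    [IsProbabilityMeasure μ] [IsProbabilityMeasure ν]
    (hμ : Integrable (fun x => ‖x‖ ^ p) μ) (hν : Integrable (fun x => ‖x‖ ^ p) ν)
    {r : ℝ} (hr : r ∈ cset p μ (ν.map (phiAff V b))) :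
    ∃ α : Measure (EuclideanSpace ℝ (Fin n)), IsProbabilityMeasure α ∧
      Integrable (fun x => ‖x‖ ^ p) α ∧ α.map (phiAff V b) = μ ∧
      wassersteinDist p α ν ≤ r := by
  classical
  set φ := phiAff V b with hφdef
  have hφm : Measurable φ := phiAff_measurable V b
  obtain ⟨γ, hγ1, hγ2, rfl⟩ := hr
  haveI : IsProbabilityMeasure γ := isProbabilityMeasure_of_map_fst hγ1
  -- moment of ν.map φ
  have hmomφν : Integrable (fun x => ‖x‖ ^ p) (ν.map φ) := by
    rw [integrable_map_measure (normRpowCont hp).aestronglyMeasurable hφm.aemeasurable]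
    have hb : Integrable (fun _ : EuclideanSpace ℝ (Fin n) => ‖b‖ ^ p) ν :=
      integrable_const _
    have := integrable_norm_rpow_add hp
      ((Matrix.toEuclideanLin V).continuous_of_finiteDimensional).aestronglyMeasurable
      aestronglyMeasurable_const
      (?_ : Integrable (fun x => ‖Matrix.toEuclideanLin V x‖ ^ p) ν) hb
    · apply this.congr
      filter_upwards with x
      simp only [Function.comp]
      rw [hφdef, phiAff_eq]
    · apply Integrable.mono hν (((normRpowCont hp).comp
        ((Matrix.toEuclideanLin V).continuous_of_finiteDimensional)).aestronglyMeasurable)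
      filter_upwards with x
      simp only [Function.comp]
      rw [Real.norm_eq_abs, Real.norm_eq_abs, abs_of_nonneg (Real.rpow_nonneg (norm_nonneg _) _),
        abs_of_nonneg (Real.rpow_nonneg (norm_nonneg _) _)]
      exact Real.rpow_le_rpow (norm_nonneg _) (V_contr V hV x) (by linarith)
  -- the graph measure and its disintegration
  set η : Measure (EuclideanSpace ℝ (Fin m) × EuclideanSpace ℝ (Fin n)) :=
    ν.map (fun x => (φ x, x)) with hηdef
  have hgm : Measurable (fun x : EuclideanSpace ℝ (Fin n) => (φ x, x)) :=
    hφm.prodMk measurable_id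
  haveI : IsProbabilityMeasure η := Measure.isProbabilityMeasure_map hgm.aemeasurable
  have hηfst : η.fst = ν.map φ := by
    rw [hηdef, Measure.fst, Measure.map_map measurable_fst hgm]
    rfl
  have hηsnd : η.snd = ν := by
    rw [hηdef, Measure.snd, Measure.map_map measurable_snd hgm,
      show (Prod.snd ∘ fun x : EuclideanSpace ℝ (Fin n) => (φ x, x)) = id from rfl,
      Measure.map_id]
  set κ := η.condKernel with hκdef
  have hdis : η.fst ⊗ₘ κ = η := η.disintegrate κ
  set κ2 : ProbabilityTheory.Kernel (EuclideanSpace ℝ (Fin m) × EuclideanSpace ℝ (Fin m))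
      (EuclideanSpace ℝ (Fin n)) := κ.comap Prod.snd measurable_snd with hκ2def
  set Γ := γ ⊗ₘ κ2 with hΓdef
  haveI : IsProbabilityMeasure Γ := by rw [hΓdef]; infer_instance
  have hΓ1 : Γ.map Prod.fst = γ := by
    rw [hΓdef]
    exact Measure.fst_compProd γ κ2
  have hΓ2 : Γ.map Prod.snd = ν := by
    ext s hs
    have hkey : ∫⁻ y, κ y s ∂η.fst = η (Prod.snd ⁻¹' s) := by
      conv_rhs => rw [← hdis]
      rw [Measure.compProd_apply (measurable_snd hs)]
      rfl
    rw [Measure.map_apply measurable_snd hs, hΓdef,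
      Measure.compProd_apply (measurable_snd hs)]
    have hslice : ∀ a : EuclideanSpace ℝ (Fin m) × EuclideanSpace ℝ (Fin m),
        (Prod.mk a ⁻¹' (Prod.snd ⁻¹' s)) = s := fun a => rfl
    simp_rw [hslice, hκ2def, ProbabilityTheory.Kernel.comap_apply]
    rw [show (∫⁻ a : EuclideanSpace ℝ (Fin m) × EuclideanSpace ℝ (Fin m), κ a.2 s ∂γ)
        = ∫⁻ y, κ y s ∂(γ.map Prod.snd) from
      (lintegral_map (κ.measurable_coe hs) measurable_snd).symm]
    rw [hγ2, ← hηfst, hkey, ← hηsnd, Measure.snd, Measure.map_apply measurable_snd hs]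
  -- the graph property
  set S : Set (EuclideanSpace ℝ (Fin m) × EuclideanSpace ℝ (Fin n)) :=
    {q | φ q.2 = q.1} with hSdef
  have hSmeas : MeasurableSet S :=
    measurableSet_eq_fun (hφm.comp measurable_snd) measurable_fst
  have hηS : η Sᶜ = 0 := by
    rw [hηdef, Measure.map_apply hgm hSmeas.compl,
      show ((fun x : EuclideanSpace ℝ (Fin n) => (φ x, x)) ⁻¹' Sᶜ) = ∅ from by
        ext x; simp [hSdef]]
    exact measure_empty
  have haefst : ∀ᵐ y ∂η.fst, κ y (Prod.mk y ⁻¹' Sᶜ) = 0 := by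
    have h0 : (η.fst ⊗ₘ κ) Sᶜ = 0 := by rw [hdis]; exact hηS
    rw [Measure.compProd_apply hSmeas.compl,
      lintegral_eq_zero_iff
        (ProbabilityTheory.Kernel.measurable_kernel_prodMk_left hSmeas.compl)] at h0
    exact h0
  have haeγ : ∀ᵐ a ∂γ, κ a.2 (Prod.mk a.2 ⁻¹' Sᶜ) = 0 := by
    have hmap : γ.map Prod.snd = η.fst := by rw [hγ2, hηfst]
    have h1 := haefst
    rw [← hmap, MeasureTheory.ae_map_iff measurable_snd.aemeasurable] at h1
    · exact h1
    · have : {y : EuclideanSpace ℝ (Fin m) | κ y (Prod.mk y ⁻¹' Sᶜ) = 0}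
          = (fun y => κ y (Prod.mk y ⁻¹' Sᶜ)) ⁻¹' {0} := rfl
      rw [this]
      exact (ProbabilityTheory.Kernel.measurable_kernel_prodMk_left hSmeas.compl)
        (measurableSet_singleton 0)
  have hΓae : ∀ᵐ q ∂Γ, φ q.2 = q.1.2 := by
    rw [ae_iff]
    have hm : MeasurableSet {q : (EuclideanSpace ℝ (Fin m) × EuclideanSpace ℝ (Fin m)) ×
        EuclideanSpace ℝ (Fin n) | ¬ φ q.2 = q.1.2} := by
      have : {q : (EuclideanSpace ℝ (Fin m) × EuclideanSpace ℝ (Fin m)) ×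
          EuclideanSpace ℝ (Fin n) | ¬ φ q.2 = q.1.2}
          = (fun q => (q.1.2, q.2)) ⁻¹' Sᶜ := rfl
      rw [this]
      exact (measurable_fst.snd.prodMk measurable_snd) hSmeas.compl
    rw [hΓdef, Measure.compProd_apply hm]
    have hslice : ∀ a : EuclideanSpace ℝ (Fin m) × EuclideanSpace ℝ (Fin m),
        Prod.mk a ⁻¹' {q : (EuclideanSpace ℝ (Fin m) × EuclideanSpace ℝ (Fin m)) ×
          EuclideanSpace ℝ (Fin n) | ¬ φ q.2 = q.1.2} = Prod.mk a.2 ⁻¹' Sᶜ := fun a => rfl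
    simp_rw [hslice, hκ2def, ProbabilityTheory.Kernel.comap_apply]
    rw [lintegral_congr_ae haeγ]
    simp
  -- the transported measure
  set u : (EuclideanSpace ℝ (Fin m) × EuclideanSpace ℝ (Fin m)) × EuclideanSpace ℝ (Fin n)
      → EuclideanSpace ℝ (Fin n) :=
    fun q => q.2 + Matrix.toEuclideanLin V.transpose (q.1.1 - q.1.2) with hudef
  have hucont : Continuous u := by
    rw [hudef]
    exact continuous_snd.add
      (((Matrix.toEuclideanLin V.transpose).continuous_of_finiteDimensional).comp
        (continuous_fst.fst.sub continuous_fst.snd))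
  have hum : Measurable u := hucont.measurable
  have hcostγ : Integrable (fun z : EuclideanSpace ℝ (Fin m) × EuclideanSpace ℝ (Fin m) =>
      ‖z.1 - z.2‖ ^ p) γ := integrable_cost hp hγ1 hγ2 hμ hmomφν
  have h3 : Integrable (fun q : (EuclideanSpace ℝ (Fin m) × EuclideanSpace ℝ (Fin m)) ×
      EuclideanSpace ℝ (Fin n) => ‖q.1.1 - q.1.2‖ ^ p) Γ := by
    have hc2 : AEStronglyMeasurable
        (fun z : EuclideanSpace ℝ (Fin m) × EuclideanSpace ℝ (Fin m) => ‖z.1 - z.2‖ ^ p)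
        (Γ.map Prod.fst) :=
      ((normRpowCont hp).comp (continuous_fst.sub continuous_snd)).aestronglyMeasurable
    have := (integrable_map_measure hc2 measurable_fst.aemeasurable).mp (by rwa [hΓ1])
    exact this
  refine ⟨Γ.map u, Measure.isProbabilityMeasure_map hum.aemeasurable, ?_, ?_, ?_⟩
  · -- finite p-th moment
    rw [integrable_map_measure (normRpowCont hp).aestronglyMeasurable hum.aemeasurable]
    have h2 : Integrable (fun q : (EuclideanSpace ℝ (Fin m) × EuclideanSpace ℝ (Fin m)) ×
        EuclideanSpace ℝ (Fin n) => ‖q.2‖ ^ p) Γ :=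
      integrable_norm_rpow_comp_map hp measurable_snd hΓ2 hν
    have h3' : Integrable (fun q : (EuclideanSpace ℝ (Fin m) × EuclideanSpace ℝ (Fin m)) ×
        EuclideanSpace ℝ (Fin n) =>
        ‖Matrix.toEuclideanLin V.transpose (q.1.1 - q.1.2)‖ ^ p) Γ := by
      simp only [Vt_isom V hV]
      exact h3
    have := integrable_norm_rpow_add hp measurable_snd.aestronglyMeasurable
      ((((Matrix.toEuclideanLin V.transpose).continuous_of_finiteDimensional).comp
        (continuous_fst.fst.sub continuous_fst.snd)).aestronglyMeasurable) h2 h3'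
    apply this.congr
    filter_upwards with q
    rfl
  · -- pushforward equals μ
    rw [Measure.map_map hφm hum]
    have hae : (φ ∘ u) =ᵐ[Γ] (fun q => q.1.1) := by
      filter_upwards [hΓae] with q hq
      rw [hφdef, phiAff_eq] at hq
      simp only [Function.comp, hudef, hφdef, phiAff_eq, map_add, VVt_id V hV]
      rw [← hq]
      abel
    rw [Measure.map_congr hae,
      show (fun q : (EuclideanSpace ℝ (Fin m) × EuclideanSpace ℝ (Fin m)) ×
        EuclideanSpace ℝ (Fin n) => q.1.1) = Prod.fst ∘ Prod.fst from rfl,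
      ← Measure.map_map measurable_fst measurable_fst, hΓ1, hγ1]
  · -- Wasserstein bound
    rw [wassersteinDist_eq]
    apply csInf_le (cset_bddBelow _ _)
    refine ⟨Γ.map (fun q => (u q, q.2)), ?_, ?_, ?_⟩
    · rw [Measure.map_map measurable_fst (hum.prodMk measurable_snd)]
      rfl
    · rw [Measure.map_map measurable_snd (hum.prodMk measurable_snd)]
      exact hΓ2
    · have hc : AEStronglyMeasurable
          (fun z : EuclideanSpace ℝ (Fin n) × EuclideanSpace ℝ (Fin n) => ‖z.1 - z.2‖ ^ p)
          (Γ.map (fun q => (u q, q.2))) :=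
        ((normRpowCont hp).comp (continuous_fst.sub continuous_snd)).aestronglyMeasurable
      rw [integral_map (hum.prodMk measurable_snd).aemeasurable hc]
      have heq : ∀ q : (EuclideanSpace ℝ (Fin m) × EuclideanSpace ℝ (Fin m)) ×
          EuclideanSpace ℝ (Fin n), ‖u q - q.2‖ ^ p = ‖q.1.1 - q.1.2‖ ^ p := by
        intro q
        rw [hudef]
        simp only [add_sub_cancel_left]
        rw [Vt_isom V hV]
      simp_rw [heq]
      congr 1
      have hc2 : AEStronglyMeasurable
          (fun z : EuclideanSpace ℝ (Fin m) × EuclideanSpace ℝ (Fin m) => ‖z.1 - z.2‖ ^ p)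
          (Γ.map Prod.fst) :=
        ((normRpowCont hp).comp (continuous_fst.sub continuous_snd)).aestronglyMeasurable
      rw [← hΓ1, integral_map measurable_fst.aemeasurable hc2]

lemma exists_V0 (hmn : m ≤ n) : ∃ V : Matrix (Fin m) (Fin n) ℝ, V * V.transpose = 1 := by
  refine ⟨Matrix.of fun i j => if j = Fin.castLE hmn i then (1 : ℝ) else 0, ?_⟩
  ext i k
  rw [Matrix.mul_apply, Matrix.one_apply]
  simp only [Matrix.transpose_apply, Matrix.of_apply, ite_mul, one_mul, zero_mul]
  rw [Finset.sum_ite_eq' Finset.univ (Fin.castLE hmn i)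
    (fun j => if j = Fin.castLE hmn k then (1 : ℝ) else 0)]
  simp [Fin.castLE_inj]

end AuxProof

theorem projection_eq_embedding_wasserstein {m n : ℕ} (hmn : m ≤ n) (p : ℝ) (hp : 1 ≤ p)
    (μ : Measure (EuclideanSpace ℝ (Fin m))) (ν : Measure (EuclideanSpace ℝ (Fin n)))
    [IsProbabilityMeasure μ] [IsProbabilityMeasure ν]
    (hμ : Integrable (fun x => ‖x‖ ^ p) μ) (hν : Integrable (fun x => ‖x‖ ^ p) ν) :
    sInf {r : ℝ | ∃ (V : Matrix (Fin m) (Fin n) ℝ) (b : EuclideanSpace ℝ (Fin m)),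
        V * V.transpose = 1 ∧ r = wassersteinDist p μ (ν.map (phiAff V b))} =
    sInf {r : ℝ | ∃ α : Measure (EuclideanSpace ℝ (Fin n)), IsProbabilityMeasure α ∧
        Integrable (fun x => ‖x‖ ^ p) α ∧
        (∃ (V : Matrix (Fin m) (Fin n) ℝ) (b : EuclideanSpace ℝ (Fin m)),
          V * V.transpose = 1 ∧ α.map (phiAff V b) = μ) ∧
        r = wassersteinDist p α ν} := by
  set S1 := {r : ℝ | ∃ (V : Matrix (Fin m) (Fin n) ℝ) (b : EuclideanSpace ℝ (Fin m)),
      V * V.transpose = 1 ∧ r = wassersteinDist p μ (ν.map (phiAff V b))} with hS1def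
  set S2 := {r : ℝ | ∃ α : Measure (EuclideanSpace ℝ (Fin n)), IsProbabilityMeasure α ∧
      Integrable (fun x => ‖x‖ ^ p) α ∧
      (∃ (V : Matrix (Fin m) (Fin n) ℝ) (b : EuclideanSpace ℝ (Fin m)),
        V * V.transpose = 1 ∧ α.map (phiAff V b) = μ) ∧
      r = wassersteinDist p α ν} with hS2def
  obtain ⟨V0, hV0⟩ := exists_V0 hmn
  have hS1ne : S1.Nonempty := ⟨_, V0, 0, hV0, rfl⟩
  have hS1bdd : BddBelow S1 := by
    refine ⟨0, fun r hr => ?_⟩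
    obtain ⟨V, b, -, rfl⟩ := hr
    exact wassersteinDist_nonneg _ _
  have hS2bdd : BddBelow S2 := by
    refine ⟨0, fun r hr => ?_⟩
    obtain ⟨α, -, -, -, rfl⟩ := hr
    exact wassersteinDist_nonneg _ _
  -- generic: from any coupling element for (V, b), get an S2 element below it
  have key : ∀ (V : Matrix (Fin m) (Fin n) ℝ) (b : EuclideanSpace ℝ (Fin m)),
      V * V.transpose = 1 → ∀ r ∈ cset p μ (ν.map (phiAff V b)), ∃ s ∈ S2, s ≤ r := by
    intro V b hV r hr
    obtain ⟨α, hprob, hmom, hpush, hle⟩ := hard_dir hp V b hV μ ν hμ hν hr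
    exact ⟨wassersteinDist p α ν, ⟨α, hprob, hmom, ⟨V, b, hV, hpush⟩, rfl⟩, hle⟩
  have hS2ne : S2.Nonempty := by
    haveI : IsProbabilityMeasure (ν.map (phiAff V0 0)) :=
      Measure.isProbabilityMeasure_map (phiAff_measurable V0 0).aemeasurable
    obtain ⟨r, hr⟩ := cset_nonempty μ (ν.map (phiAff V0 0))
    obtain ⟨s, hs, -⟩ := key V0 0 hV0 r hr
    exact ⟨s, hs⟩
  apply le_antisymm
  · apply le_csInf hS2ne
    rintro r ⟨α, hprob, hmom, ⟨V, b, hV, hpush⟩, rfl⟩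
    haveI := hprob
    refine le_trans (csInf_le hS1bdd ⟨V, b, hV, rfl⟩) ?_
    exact easy_dir hp V b hV μ ν hν α hmom hpush
  · apply le_csInf hS1ne
    rintro r ⟨V, b, hV, rfl⟩
    haveI : IsProbabilityMeasure (ν.map (phiAff V b)) :=
      Measure.isProbabilityMeasure_map (phiAff_measurable V b).aemeasurable
    apply _root_.le_of_forall_pos_le_add
    intro ε hε
    have hlt : sInf (cset p μ (ν.map (phiAff V b)))
        < wassersteinDist p μ (ν.map (phiAff V b)) + ε := by
      rw [wassersteinDist_eq]
      linarith
    obtain ⟨r', hr', hr'lt⟩ :=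
      exists_lt_of_csInf_lt (cset_nonempty μ (ν.map (phiAff V b))) hlt
    obtain ⟨s, hs, hsle⟩ := key V b hV r' hr'
    exact le_trans (csInf_le hS2bdd hs) (by linarith)
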